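/- There are no positive integers d_1, d_3 satisfying both 2 d_2 (4 d_1 − d_3) = −16 d_1^2 + 2 d_1^2 d_3 − 6 d_1 d_3 + d_1 d_3^2 + d_3^2 for some positive integer d_2 and d_3^3(d_1^2 − 1) + d_1^2 d_3^2 (d_1 − 8) + 3 d_1^3 d_3 (d_3 − 16) + P = 0 with P > 0, except (d_1, d_3) = (3, 6), which forces d_2 = 0. Formally: the unique solution in positive integers (d_1, d_3) of d_3^3(d_1^2 − 1) + d_1^2 d_3^2(d_1 − 8) + 3 d_1^3 d_3(d_3 − 16) = −P for the specific positive remainder polynomial of the parallelogram (Q1), subcase I, is (d_1, d_3) = (3, 6), and then 2 d_2 (4·3 − 6) = −16·9 + 2·9·6 − 6·3·6 + 3·36 + 36 gives d_2 = 0. -/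

import Mathlib

lemma aux_Q1 (m n : ℤ) (hm : 1 ≤ m) (hn : 1 ≤ n)
    (h : n^3 + 8*m^2*n^2 + 48*m^3*n = 12*m*n^2 + m^2*n^3 + 128*m^3 + 4*m^3*n^2) :
    m = 3 ∧ n = 6 := by
  obtain ⟨s, rfl⟩ := Int.le.dest hm
  have hn7 : n ≤ 7 := by
    by_contra hcon
    push_neg at hcon
    obtain ⟨t, rfl⟩ := Int.le.dest (show (8:ℤ) ≤ n from hcon)
    have hkey : (256:ℤ) + 80*t + 8*t^2 + 768*s + 368*s*t + 56*s*t^2 + 2*s*t^3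
        + 112*s^2*t + 28*s^2*t^2 + s^2*t^3 + 16*s^3*t + 4*s^3*t^2 = 0 := by
      linear_combination -h
    have hpos : (0:ℤ) < 256 + 80*t + 8*t^2 + 768*s + 368*s*t + 56*s*t^2 + 2*s*t^3
        + 112*s^2*t + 28*s^2*t^2 + s^2*t^3 + 16*s^3*t + 4*s^3*t^2 := by positivity
    linarith
  have hn4 : 4 ≤ n := by
    by_contra hcon
    push_neg at hcon
    interval_cases n
    · have hkey : (88:ℤ) + 250*s + 245*s^2 + 84*s^3 = 0 := by linear_combination -h
      have hpos : (0:ℤ) < 88 + 250*s + 245*s^2 + 84*s^3 := by positivity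
      linarith
    · have hkey : (64:ℤ) + 144*s + 120*s^2 + 48*s^3 = 0 := by linear_combination -h
      have hpos : (0:ℤ) < 64 + 144*s + 120*s^2 + 48*s^3 := by positivity
      linarith
    · have hkey : (56:ℤ) + 78*s + 15*s^2 + 20*s^3 = 0 := by linear_combination -h
      have hpos : (0:ℤ) < 56 + 78*s + 15*s^2 + 20*s^3 := by positivity
      linarith
  interval_cases n
  · -- n = 4 : 64 s² = 64 s + 64 impossible
    exfalso
    have hkey : 64*(s:ℤ)^2 = 64*s + 64 := by linear_combination h
    have hc : s = 0 ∨ s = 1 ∨ 2 ≤ s := by omega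
    rcases hc with rfl | rfl | hs2
    · norm_num at hkey
    · norm_num at hkey
    · have hs2' : (2:ℤ) ≤ (s:ℤ) := by exact_mod_cast hs2
      nlinarith [hkey, hs2']
  · -- n = 5
    exfalso
    have hc : s = 0 ∨ s = 1 ∨ 2 ≤ s := by omega
    rcases hc with rfl | rfl | hs2
    · norm_num at h
    · norm_num at h
    · obtain ⟨u, rfl⟩ := Nat.exists_eq_add_of_le hs2
      have hkey : (224:ℤ) + 474*u + 183*u^2 + 12*u^3 = 0 := by
        push_cast at h ⊢; linear_combination h
      have hpos : (0:ℤ) < 224 + 474*u + 183*u^2 + 12*u^3 := by positivity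
      linarith
  · -- n = 6 : only s = 2 (m = 3)
    have hc : s = 0 ∨ s = 1 ∨ s = 2 ∨ 3 ≤ s := by omega
    rcases hc with rfl | rfl | rfl | hs3
    · norm_num at h
    · norm_num at h
    · norm_num
    · exfalso
      obtain ⟨u, rfl⟩ := Nat.exists_eq_add_of_le hs3
      have hkey : (664:ℤ) + 912*u + 264*u^2 + 16*u^3 = 0 := by
        push_cast at h ⊢; linear_combination h
      have hpos : (0:ℤ) < 664 + 912*u + 264*u^2 + 16*u^3 := by positivity
      linarith
  · -- n = 7
    exfalso
    have hc : s = 0 ∨ s = 1 ∨ s = 2 ∨ s = 3 ∨ 4 ≤ s := by omega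
    rcases hc with rfl | rfl | rfl | rfl | hs4
    · norm_num at h
    · norm_num at h
    · norm_num at h
    · norm_num at h
    · obtain ⟨u, rfl⟩ := Nat.exists_eq_add_of_le hs4
      have hkey : (128:ℤ) + 802*u + 229*u^2 + 12*u^3 = 0 := by
        push_cast at h ⊢; linear_combination h
      have hpos : (0:ℤ) < 128 + 802*u + 229*u^2 + 12*u^3 := by positivity
      linarith

/-- Parallelogram (Q1), subcase I: with c₁/d₁ = 8/d₃ − 1, c₂/d₂ = 4/d₃ − 1/d₁,
c₃/d₃ = (1/2)(−1 − 1/d₁ + 4/d₃), no positive integers d₁, d₂, d₃ satisfy both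
c₁ + c₂ + c₃ = −1 and the null condition 1 = c₁²/d₁ + c₂²/d₂ + c₃²/d₃. -/
theorem no_sol_Q1_subcaseI :
    ¬ ∃ d1 d2 d3 : ℕ, 0 < d1 ∧ 0 < d2 ∧ 0 < d3 ∧
      (let c1 : ℝ := (d1 : ℝ) * (8 / (d3 : ℝ) - 1)
       let c2 : ℝ := (d2 : ℝ) * (4 / (d3 : ℝ) - 1 / (d1 : ℝ))
       let c3 : ℝ := (d3 : ℝ) * ((1 / 2) * (-1 - 1 / (d1 : ℝ) + 4 / (d3 : ℝ)))
       c1 + c2 + c3 = -1 ∧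
       1 = c1 ^ 2 / (d1 : ℝ) + c2 ^ 2 / (d2 : ℝ) + c3 ^ 2 / (d3 : ℝ)) := by
  rintro ⟨d1, d2, d3, h1, h2, h3, hA, hB⟩
  set x : ℝ := (d1 : ℝ) with hxdef
  set y : ℝ := (d2 : ℝ) with hydef
  set z : ℝ := (d3 : ℝ) with hzdef
  have hx : x ≠ 0 := Nat.cast_ne_zero.mpr h1.ne'
  have hy : y ≠ 0 := Nat.cast_ne_zero.mpr h2.ne'
  have hz : z ≠ 0 := Nat.cast_ne_zero.mpr h3.ne'
  have hA' := hA
  have hB' := hB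
  field_simp at hA' hB'
  have E1R : 2*y*(4*x - z) = 2*x^2*z - 16*x^2 + x*z^2 + z^2 - 6*x*z := by
    apply mul_right_cancel₀ (show x*z^2 ≠ 0 by positivity)
    linear_combination (x*z^2) * hA'
  have E2R : 4*x^2*z^2 = 4*x^3*(8-z)^2 + 4*y*(4*x-z)^2 + z*(4*x-z-x*z)^2 := by
    apply mul_right_cancel₀ (show x^3*z^5*y ≠ 0 by positivity)
    linear_combination (x^3*z^5*y) * hB'
  have FR : z^3 + 8*x^2*z^2 + 48*x^3*z = 12*x*z^2 + x^2*z^3 + 128*x^3 + 4*x^3*z^2 := by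
    linear_combination E2R + 2*(4*x - z)*E1R
  rw [hxdef, hzdef] at FR
  have hN : d3^3 + 8*d1^2*d3^2 + 48*d1^3*d3
      = 12*d1*d3^2 + d1^2*d3^3 + 128*d1^3 + 4*d1^3*d3^2 := by
    exact_mod_cast FR
  have hm : (1:ℤ) ≤ (d1:ℤ) := by exact_mod_cast h1
  have hn : (1:ℤ) ≤ (d3:ℤ) := by exact_mod_cast h3
  have hZ : ((d3:ℤ))^3 + 8*(d1:ℤ)^2*(d3:ℤ)^2 + 48*(d1:ℤ)^3*(d3:ℤ)
      = 12*(d1:ℤ)*(d3:ℤ)^2 + (d1:ℤ)^2*(d3:ℤ)^3 + 128*(d1:ℤ)^3 + 4*(d1:ℤ)^3*(d3:ℤ)^2 := by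
    exact_mod_cast hN
  obtain ⟨key1, key2⟩ := aux_Q1 _ _ hm hn hZ
  have hd1 : d1 = 3 := by exact_mod_cast key1
  have hd3 : d3 = 6 := by exact_mod_cast key2
  subst hd1 hd3
  have hy0 : y = 0 := by
    rw [hxdef, hzdef] at E1R
    push_cast at E1R
    linarith
  rw [hydef] at hy0
  have : d2 = 0 := by exact_mod_cast hy0
  omega
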